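/- With the setup of the cocycle w(g) = φ(α^ρ_g(r₁))* γ_g(φ(r₁)) for a unital homomorphism φ : E_d → C with φ∘μ₀ equivariant: if v ∈ U(C) satisfies v γ_g(v)* = w(g) for all g ∈ G, then there is a unique unital *-homomorphism ψ : E_d → C with ψ(r_j) = φ(r_j) v for j = 1,…,d; moreover ψ is equivariant (ψ∘α^ρ_g = γ_g∘ψ) and ψ∘μ₀ = φ∘μ₀. -/

import Mathlib

open scoped BigOperators

/-- Lemma 3.7(5) of the paper: with `w(g) = φ(α^ρ_g(r₁))* γ_g(φ(r₁))` as before, if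
`v ∈ U(C)` satisfies `v γ_g(v)* = w(g)` for all `g`, then there is a unique unital
*-homomorphism `ψ : E_d → C` with `ψ(r_j) = φ(r_j) v`; moreover `ψ` is equivariant and
`ψ∘μ₀ = φ∘μ₀`.  `E_d` is axiomatized by its generators, relations and universal property. -/
theorem stmt14 {G : Type*} [Group G] [TopologicalSpace G] [IsTopologicalGroup G]
    (d : ℕ) (hd : 0 < d)
    {E : Type u} [NormedRing E] [StarRing E] [CStarRing E] [CompleteSpace E]
    [NormedAlgebra ℂ E] [StarModule ℂ E]
    (r : Fin d → E)
    (hiso : ∀ j, star (r j) * r j = 1)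
    (horth : ∀ j k, j ≠ k → (r j * star (r j)) * (r k * star (r k)) = 0)
    (huniv : ∀ (D : Type u) [NormedRing D] [StarRing D] [CStarRing D] [CompleteSpace D]
      [NormedAlgebra ℂ D] [StarModule ℂ D] (t : Fin d → D),
      (∀ j, star (t j) * t j = 1) →
      (∀ j k, j ≠ k → (t j * star (t j)) * (t k * star (t k)) = 0) →
      ∃! ψ : E →⋆ₐ[ℂ] D, ∀ j, ψ (r j) = t j)
    {C : Type u} [NormedRing C] [StarRing C] [CStarRing C] [CompleteSpace C]
    [NormedAlgebra ℂ C] [StarModule ℂ C]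
    (γ : G → C ≃⋆ₐ[ℂ] C) (hγmul : ∀ g h c, γ (g * h) c = γ g (γ h c))
    (hγcont : ∀ c, Continuous fun g => γ g c)
    (ρ : G → Matrix (Fin d) (Fin d) ℂ)
    (hρU : ∀ g, ρ g ∈ unitary (Matrix (Fin d) (Fin d) ℂ))
    (hρ1 : ρ 1 = 1) (hρmul : ∀ g h, ρ (g * h) = ρ g * ρ h)
    (hρcont : Continuous ρ)
    (μ₀ : Matrix (Fin d) (Fin d) ℂ → ℂ → E)
    (hμ₀def : ∀ x l, μ₀ x l =
      (∑ j, ∑ k, x j k • (r j * star (r k))) + l • (1 - ∑ j, r j * star (r j)))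
    (α : G → E ≃⋆ₐ[ℂ] E) (hαmul : ∀ g h a, α (g * h) a = α g (α h a))
    (hαdef : ∀ g j, α g (r j) = μ₀ (ρ g) 1 * r j)
    (φ : E →⋆ₐ[ℂ] C)
    (hequiv : ∀ g x l, γ g (φ (μ₀ x l)) = φ (μ₀ (ρ g * x * star (ρ g)) l))
    (w : G → C)
    (hwdef : ∀ g, w g = star (φ (α g (r ⟨0, hd⟩))) * γ g (φ (r ⟨0, hd⟩)))
    (v : C) (hv : v ∈ unitary C)
    (hvw : ∀ g, v * star (γ g v) = w g) :
    (∃! ψ : E →⋆ₐ[ℂ] C, ∀ j, ψ (r j) = φ (r j) * v) ∧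
      ∀ ψ : E →⋆ₐ[ℂ] C, (∀ j, ψ (r j) = φ (r j) * v) →
        (∀ g a, ψ (α g a) = γ g (ψ a)) ∧ (∀ x l, ψ (μ₀ x l) = φ (μ₀ x l)) := by
  set j0 : Fin d := ⟨0, hd⟩ with hj0
  have hv1 : star v * v = 1 := hv.1
  have hv2 : v * star v = 1 := hv.2
  have hco : ∀ j k, j ≠ k → star (r j) * r k = 0 := by
    intro j k hjk
    have h1 : star (r j) = star (r j) * (r j * star (r j)) := by
      rw [← mul_assoc, hiso, one_mul]
    have h2 : r k = (r k * star (r k)) * r k := by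
      rw [mul_assoc, hiso, mul_one]
    conv_lhs => rw [h1, h2]
    rw [mul_assoc, ← mul_assoc (r j * star (r j)), horth j k hjk, zero_mul, mul_zero]
  -- μ₀ x l * r m = ∑ a, x a m • r a
  have key1 : ∀ (x : Matrix (Fin d) (Fin d) ℂ) (l : ℂ) (m : Fin d),
      μ₀ x l * r m = ∑ a, x a m • r a := by
    intro x l m
    rw [hμ₀def, add_mul, Finset.sum_mul]
    have hterm : ∀ j ∈ Finset.univ, (∑ k, x j k • (r j * star (r k))) * r m
        = x j m • r j := by
      intro j _
      rw [Finset.sum_mul, Finset.sum_eq_single m]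
      · rw [smul_mul_assoc, mul_assoc, hiso, mul_one]
      · intro k _ hk
        rw [smul_mul_assoc, mul_assoc, hco k m hk, mul_zero, smul_zero]
      · simp
    rw [Finset.sum_congr rfl hterm]
    have h2 : (l • ((1 : E) - ∑ j, r j * star (r j))) * r m = 0 := by
      rw [smul_mul_assoc, sub_mul, one_mul, Finset.sum_mul]
      have hpr : ∀ j ∈ Finset.univ, (r j * star (r j)) * r m
          = if j = m then r m else 0 := by
        intro j _
        by_cases h : j = m
        · subst h; rw [mul_assoc, hiso, mul_one]; simp
        · rw [mul_assoc, hco j m h, mul_zero]; simp [h]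
      rw [Finset.sum_congr rfl hpr, Finset.sum_ite_eq' Finset.univ m fun _ => r m]
      simp
    rw [h2, add_zero]
  -- μ₀ of a matrix unit
  have key2 : ∀ j k : Fin d, μ₀ (Matrix.single j k 1) 0 = r j * star (r k) := by
    intro j k
    rw [hμ₀def, zero_smul, add_zero]
    have hmain : ∀ a ∈ Finset.univ,
        ∑ b, Matrix.single j k (1 : ℂ) a b • (r a * star (r b))
        = if a = j then r j * star (r k) else 0 := by
      intro a _
      by_cases ha : a = j
      · subst ha
        rw [Finset.sum_eq_single k]
        · simp [Matrix.single]
        · intro b _ hb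
          have : k ≠ b := Ne.symm hb
          simp [Matrix.single, this]
        · simp
      · have hja : j ≠ a := fun h => ha h.symm
        rw [if_neg ha]
        apply Finset.sum_eq_zero
        intro b _
        simp [Matrix.single, hja]
    rw [Finset.sum_congr rfl hmain,
      Finset.sum_ite_eq' Finset.univ j fun _ => r j * star (r k)]
    simp
  -- the key identity in E
  have keyE : ∀ (g : G) (j : Fin d),
      μ₀ (ρ g * Matrix.single j j0 1 * star (ρ g)) 0
        * (μ₀ (ρ g) 1 * r j0) = μ₀ (ρ g) 1 * r j := by
    intro g j
    set Y : Matrix (Fin d) (Fin d) ℂ := ρ g * Matrix.single j j0 1 * star (ρ g)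
      with hY
    rw [key1 (ρ g) 1 j0, key1 (ρ g) 1 j, Finset.mul_sum]
    have hstep : ∀ b ∈ Finset.univ,
        μ₀ Y 0 * (ρ g b j0 • r b) = ∑ a, (Y a b * ρ g b j0) • r a := by
      intro b _
      rw [mul_smul_comm, key1 Y 0 b, Finset.smul_sum]
      exact Finset.sum_congr rfl fun a _ => by
        rw [smul_smul, mul_comm (ρ g b j0) (Y a b)]
    rw [Finset.sum_congr rfl hstep, Finset.sum_comm]
    refine Finset.sum_congr rfl fun a _ => ?_
    rw [← Finset.sum_smul]
    congr 1
    have hsum : ∑ b, Y a b * ρ g b j0 = (Y * ρ g) a j0 := by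
      rw [Matrix.mul_apply]
    have hYρ : Y * ρ g = ρ g * Matrix.single j j0 1 := by
      rw [hY, mul_assoc (ρ g * Matrix.single j j0 1) (star (ρ g)) (ρ g),
        (Unitary.mem_iff.mp (hρU g)).1, mul_one]
    rw [hsum, hYρ, Matrix.mul_apply, Finset.sum_eq_single j]
    · simp [Matrix.single]
    · intro b _ hb
      have : j ≠ b := Ne.symm hb
      simp [Matrix.single, this]
    · simp
  -- cocycle computation
  have hkey : ∀ (g : G) (j : Fin d),
      γ g (φ (r j)) * γ g v = φ (μ₀ (ρ g) 1) * φ (r j) * v := by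
    intro g j
    have hγv : γ g v = star (w g) * v := by
      have h1 : star (γ g v) = star v * w g := by
        calc star (γ g v) = star v * (v * star (γ g v)) := by
              rw [← mul_assoc, hv1, one_mul]
          _ = star v * w g := by rw [hvw g]
      calc γ g v = star (star (γ g v)) := (star_star _).symm
        _ = star (star v * w g) := by rw [h1]
        _ = star (w g) * v := by rw [star_mul, star_star]
    have hA : γ g (φ (r j * star (r j0))) =
        φ (μ₀ (ρ g * Matrix.single j j0 1 * star (ρ g)) 0) := by
      rw [← key2 j j0, hequiv]
    have hB : γ g (φ (r j * star (r j0))) = γ g (φ (r j)) * star (γ g (φ (r j0))) := by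
      rw [map_mul, map_star, map_mul, map_star]
    have hwstar : star (w g) = star (γ g (φ (r j0))) * φ (μ₀ (ρ g) 1 * r j0) := by
      rw [hwdef, star_mul, star_star, hαdef]
    have e1 : γ g (φ (r j)) * γ g v
        = γ g (φ (r j)) * star (γ g (φ (r j0))) * φ (μ₀ (ρ g) 1 * r j0) * v := by
      rw [hγv, hwstar, ← mul_assoc, ← mul_assoc]
    rw [e1, ← hB, hA, ← map_mul, keyE, map_mul]
  -- ψ ∘ μ₀ = φ ∘ μ₀ for any ψ with the generator property
  have hψμ : ∀ (ψ : E →⋆ₐ[ℂ] C), (∀ j, ψ (r j) = φ (r j) * v) →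
      ∀ x l, ψ (μ₀ x l) = φ (μ₀ x l) := by
    intro ψ hψ x l
    have hrr : ∀ j k, ψ (r j * star (r k)) = φ (r j * star (r k)) := by
      intro j k
      rw [map_mul, map_mul, map_star, map_star, hψ j, hψ k, star_mul,
        mul_assoc, ← mul_assoc v, hv2, one_mul]
    rw [hμ₀def]
    simp only [map_add, map_smul, map_sum, map_sub, map_one]
    congr 1
    · exact Finset.sum_congr rfl fun j _ => Finset.sum_congr rfl fun k _ => by rw [hrr]
    · congr 2
      exact Finset.sum_congr rfl fun j _ => hrr j j
  -- existence and uniqueness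
  have ht1 : ∀ j, star (φ (r j) * v) * (φ (r j) * v) = 1 := by
    intro j
    have h : star (φ (r j)) * φ (r j) = 1 := by
      rw [← map_star, ← map_mul, hiso, map_one]
    rw [star_mul, mul_assoc, ← mul_assoc (star (φ (r j))), h, one_mul, hv1]
  have hφrr : ∀ m, φ (r m) * v * star (φ (r m) * v) = φ (r m * star (r m)) := by
    intro m
    rw [star_mul, mul_assoc, ← mul_assoc v, hv2, one_mul, ← map_star, ← map_mul]
  have ht2 : ∀ j k, j ≠ k →
      (φ (r j) * v * star (φ (r j) * v)) * (φ (r k) * v * star (φ (r k) * v)) = 0 := by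
    intro j k hjk
    rw [hφrr, hφrr, ← map_mul, horth j k hjk, map_zero]
  have hex := huniv C (fun j => φ (r j) * v) ht1 ht2
  refine ⟨hex, fun ψ hψ => ⟨?_, hψμ ψ hψ⟩⟩
  intro g a
  set Ψ₁ : E →⋆ₐ[ℂ] C := StarAlgHom.comp ψ ((α g : E →⋆ₐ[ℂ] E)) with hΨ₁
  set Ψ₂ : E →⋆ₐ[ℂ] C := StarAlgHom.comp ((γ g : C →⋆ₐ[ℂ] C)) ψ with hΨ₂
  have hΨ₁r : ∀ j, Ψ₁ (r j) = φ (μ₀ (ρ g) 1) * φ (r j) * v := by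
    intro j
    show ψ ((α g : E →⋆ₐ[ℂ] E) (r j)) = _
    have : (α g : E →⋆ₐ[ℂ] E) (r j) = α g (r j) := rfl
    rw [this, hαdef, map_mul, hψμ ψ hψ, hψ j, mul_assoc]
  have hΨ₂r : ∀ j, Ψ₂ (r j) = φ (μ₀ (ρ g) 1) * φ (r j) * v := by
    intro j
    show (γ g : C →⋆ₐ[ℂ] C) (ψ (r j)) = _
    have : ∀ c, (γ g : C →⋆ₐ[ℂ] C) c = γ g c := fun c => rfl
    rw [this, hψ j, map_mul, hkey g j]
  have ht1' : ∀ j, star (φ (μ₀ (ρ g) 1) * φ (r j) * v)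
      * (φ (μ₀ (ρ g) 1) * φ (r j) * v) = 1 := by
    intro j
    rw [← hΨ₂r j, ← map_star, ← map_mul, hiso, map_one]
  have ht2' : ∀ j k, j ≠ k →
      ((φ (μ₀ (ρ g) 1) * φ (r j) * v) * star (φ (μ₀ (ρ g) 1) * φ (r j) * v)) *
        ((φ (μ₀ (ρ g) 1) * φ (r k) * v) * star (φ (μ₀ (ρ g) 1) * φ (r k) * v)) = 0 := by
    intro j k hjk
    rw [← hΨ₂r j, ← hΨ₂r k, ← map_star, ← map_star, ← map_mul, ← map_mul, ← map_mul,
      horth j k hjk, map_zero]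
  obtain ⟨ψ₀, -, huniq⟩ := huniv C (fun j => φ (μ₀ (ρ g) 1) * φ (r j) * v) ht1' ht2'
  have h12 : Ψ₁ = Ψ₂ := by rw [huniq Ψ₁ hΨ₁r, huniq Ψ₂ hΨ₂r]
  exact DFunLike.congr_fun h12 a
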